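/- The series defining Lempert's dominating function Δ(q,z) = ∑_k (‖k‖^{‖k‖}/k^k) |q|^{#k} |z^k|, summed over all multiindices k, converges uniformly on compact subsets of ℂ × B_{l¹}(1). -/

import Mathlib

open Filter
open scoped BigOperators

open Finset

namespace LempertDelta

private lemma log_one_add_le_two_sqrt {x : ℝ} (hx : 0 ≤ x) :
    Real.log (1+x) ≤ 2 * Real.sqrt x := by
  have h1 : Real.sqrt (1+x) ≤ 1 + Real.sqrt x := by
    have : (1:ℝ) + x ≤ (1 + Real.sqrt x)^2 := by
      have hs : Real.sqrt x ^ 2 = x := Real.sq_sqrt hx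
      nlinarith [Real.sqrt_nonneg x]
    calc Real.sqrt (1+x) ≤ Real.sqrt ((1+Real.sqrt x)^2) := Real.sqrt_le_sqrt this
      _ = 1 + Real.sqrt x := by rw [Real.sqrt_sq (by positivity)]
  have h2 : Real.log (1+x) = 2 * Real.log (Real.sqrt (1+x)) := by
    rw [Real.log_sqrt (by linarith)]; ring
  rw [h2]
  have h3 : Real.log (Real.sqrt (1+x)) ≤ Real.log (1 + Real.sqrt x) :=
    Real.log_le_log (by positivity) h1
  have h4 : Real.log (1 + Real.sqrt x) ≤ Real.sqrt x := by
    have := Real.add_one_le_exp (Real.sqrt x)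
    calc Real.log (1 + Real.sqrt x) ≤ Real.log (Real.exp (Real.sqrt x)) := by
          apply Real.log_le_log (by positivity); linarith
      _ = Real.sqrt x := Real.log_exp _
  linarith

private lemma two_sqrt_mul_le {δ a b : ℝ} (hδ : 0 < δ) (ha : 0 ≤ a) (hb : 0 ≤ b) :
    2 * (Real.sqrt a * Real.sqrt b) ≤ δ*a + b/δ := by
  have key : Real.sqrt (δ*a) * Real.sqrt (b/δ) = Real.sqrt a * Real.sqrt b := by
    rw [← Real.sqrt_mul (by positivity), ← Real.sqrt_mul ha]
    congr 1; field_simp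
  have h := two_mul_le_add_sq (Real.sqrt (δ*a)) (Real.sqrt (b/δ))
  rw [Real.sq_sqrt (by positivity), Real.sq_sqrt (by positivity)] at h
  calc 2 * (Real.sqrt a * Real.sqrt b) = 2 * Real.sqrt (δ*a) * Real.sqrt (b/δ) := by
        rw [mul_assoc, key]
    _ ≤ δ*a + b/δ := h

private lemma pow_split {δ : ℝ} (hδ : 0 < δ) (a b : ℕ) :
    ((a+b : ℕ):ℝ)^(a+b) ≤ Real.exp (δ*a) * Real.exp ((1+1/δ)*b) * ((a:ℝ)^a * (b:ℝ)^b) := by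
  have e1 : (0:ℝ) ≤ δ*a := by positivity
  have e2 : (0:ℝ) ≤ (1+1/δ)*b := by positivity
  rcases Nat.eq_zero_or_pos a with ha | ha
  · subst ha
    simp only [Nat.zero_add, Nat.cast_zero, pow_zero, one_mul, mul_zero, Real.exp_zero]
    nlinarith [Real.one_le_exp e2, pow_nonneg (Nat.cast_nonneg (α := ℝ) b) b,
      Real.exp_pos ((1+1/δ)*(b:ℝ))]
  rcases Nat.eq_zero_or_pos b with hb | hb
  · subst hb
    simp only [Nat.add_zero, Nat.cast_zero, pow_zero, mul_one, mul_zero, Real.exp_zero]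
    nlinarith [Real.one_le_exp e1, pow_nonneg (Nat.cast_nonneg (α := ℝ) a) a,
      Real.exp_pos (δ*(a:ℝ))]
  have ha' : (0:ℝ) < a := by exact_mod_cast ha
  have hb' : (0:ℝ) < b := by exact_mod_cast hb
  have step1 : ((a:ℝ)+b)^a ≤ (a:ℝ)^a * Real.exp b := by
    have h0 : (a:ℝ)+b = a * (1 + b/a) := by field_simp
    rw [h0, mul_pow]
    apply mul_le_mul_of_nonneg_left _ (by positivity)
    have h1 : (1:ℝ) + (b:ℝ)/a ≤ Real.exp ((b:ℝ)/a) := by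
      have := Real.add_one_le_exp ((b:ℝ)/a); linarith
    calc (1 + (b:ℝ)/a)^a ≤ (Real.exp ((b:ℝ)/a))^a := by
          apply pow_le_pow_left₀ (by positivity) h1
      _ = Real.exp ((b:ℝ)/a * a) := by rw [← Real.exp_nat_mul]; ring_nf
      _ = Real.exp b := by rw [div_mul_cancel₀]; exact ha'.ne'
  have step2 : ((a:ℝ)+b)^b ≤ (b:ℝ)^b * Real.exp (δ*a + b/δ) := by
    have h0 : (a:ℝ)+b = b * (1 + a/b) := by field_simp; ring
    rw [h0, mul_pow]
    apply mul_le_mul_of_nonneg_left _ (by positivity)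
    have hpos : (0:ℝ) < 1 + (a:ℝ)/b := by positivity
    have h1 : (1 + (a:ℝ)/b)^b = Real.exp ((b:ℝ) * Real.log (1 + (a:ℝ)/b)) := by
      rw [Real.exp_nat_mul, Real.exp_log hpos]
    rw [h1]
    apply Real.exp_le_exp.mpr
    have h2 : Real.log (1 + (a:ℝ)/b) ≤ 2 * Real.sqrt ((a:ℝ)/b) :=
      log_one_add_le_two_sqrt (by positivity)
    have hb2 : Real.sqrt b * Real.sqrt b = (b:ℝ) := Real.mul_self_sqrt hb'.le
    have hbs : Real.sqrt (b:ℝ) ≠ 0 := by positivity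
    have h3 : (b:ℝ) * (2 * Real.sqrt ((a:ℝ)/b)) = 2 * (Real.sqrt a * Real.sqrt b) := by
      rw [Real.sqrt_div ha'.le]
      field_simp
      linear_combination (-1:ℝ) * hb2
    have h4 := two_sqrt_mul_le hδ (Nat.cast_nonneg (α := ℝ) a) (Nat.cast_nonneg (α := ℝ) b)
    calc (b:ℝ) * Real.log (1 + (a:ℝ)/b) ≤ (b:ℝ) * (2 * Real.sqrt ((a:ℝ)/b)) := by
          apply mul_le_mul_of_nonneg_left h2 hb'.le
      _ = 2 * (Real.sqrt a * Real.sqrt b) := h3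
      _ ≤ δ*a + b/δ := h4
  calc ((a+b:ℕ):ℝ)^(a+b) = ((a:ℝ)+b)^a * ((a:ℝ)+b)^b := by
        push_cast; rw [← pow_add]
    _ ≤ ((a:ℝ)^a * Real.exp b) * ((b:ℝ)^b * Real.exp (δ*a + b/δ)) := by
        apply mul_le_mul step1 step2 (by positivity) (by positivity)
    _ = (Real.exp ↑b * Real.exp (δ*(a:ℝ) + (b:ℝ)/δ)) * ((a:ℝ)^a * (b:ℝ)^b) := by ring
    _ = Real.exp (δ*a) * Real.exp ((1+1/δ)*b) * ((a:ℝ)^a * (b:ℝ)^b) := by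
        rw [← Real.exp_add, ← Real.exp_add]
        congr 1
        field_simp
        ring

/-- weighted AM-GM: `m^m * ∏ x^k ≤ (∏ k^k) * (∑ x)^m` where `m = ∑ k`. -/
private lemma amgm (k : ℕ →₀ ℕ) (x : ℕ → ℝ) (hx : ∀ n, 0 ≤ x n) :
    ((k.sum fun _ v => v : ℕ) : ℝ) ^ (k.sum fun _ v => v : ℕ) *
      ∏ n ∈ k.support, x n ^ k n ≤
    (∏ n ∈ k.support, (k n : ℝ) ^ k n) *
      (∑ n ∈ k.support, x n) ^ (k.sum fun _ v => v : ℕ) := by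
  set m : ℕ := k.sum fun _ v => v with hm
  have hmsum : m = ∑ n ∈ k.support, k n := rfl
  rcases Nat.eq_zero_or_pos m with h0 | hpos
  · have hsupp : k.support = ∅ := by
      by_contra h
      obtain ⟨n, hn⟩ := Finset.nonempty_of_ne_empty h
      have : 0 < k n := Nat.pos_of_ne_zero (Finsupp.mem_support_iff.mp hn)
      have : 0 < m := by
        rw [hmsum]
        exact lt_of_lt_of_le this (Finset.single_le_sum (fun i _ => Nat.zero_le _) hn)
      omega
    simp [hsupp, h0]
  · have hm' : (0:ℝ) < m := by exact_mod_cast hpos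
    have hknd : ∀ n ∈ k.support, 0 < (k n : ℝ) := by
      intro n hn
      exact_mod_cast Nat.pos_of_ne_zero (Finsupp.mem_support_iff.mp hn)
    -- weighted AM-GM
    have key := Real.geom_mean_le_arith_mean_weighted k.support
      (fun n => (k n : ℝ) / m) (fun n => m * x n / (k n))
      (fun n _ => by positivity)
      (by
        rw [← Finset.sum_div]
        rw [← Nat.cast_sum]
        rw [← hmsum]
        field_simp)
      (fun n hn => div_nonneg (mul_nonneg hm'.le (hx n)) (hknd n hn).le)
    have hsum_eq : ∑ n ∈ k.support, (k n : ℝ) / m * (m * x n / (k n)) =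
        ∑ n ∈ k.support, x n := by
      apply Finset.sum_congr rfl
      intro n hn
      have h1 := hknd n hn
      field_simp
    rw [hsum_eq] at key
    -- raise to power m
    have hLnn : 0 ≤ ∏ n ∈ k.support, (m * x n / (k n)) ^ ((k n : ℝ) / m) := by
      apply Finset.prod_nonneg
      intro n hn
      exact Real.rpow_nonneg (div_nonneg (mul_nonneg hm'.le (hx n)) (hknd n hn).le) _
    have key2 := pow_le_pow_left₀ hLnn key m
    have hLHS : (∏ n ∈ k.support, (m * x n / (k n)) ^ ((k n : ℝ) / m)) ^ m =
        ∏ n ∈ k.support, (m * x n / (k n)) ^ (k n) := by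
      rw [← Finset.prod_pow]
      apply Finset.prod_congr rfl
      intro n hn
      have hb : (0:ℝ) ≤ m * x n / (k n) :=
        div_nonneg (mul_nonneg hm'.le (hx n)) (hknd n hn).le
      rw [← Real.rpow_natCast ((m * x n / (k n)) ^ ((k n : ℝ) / m)) m,
        ← Real.rpow_mul hb, div_mul_cancel₀ _ hm'.ne', Real.rpow_natCast]
    rw [hLHS] at key2
    -- rewrite LHS product
    have hprod : (∏ n ∈ k.support, (k n : ℝ) ^ k n) *
        ∏ n ∈ k.support, (m * x n / (k n)) ^ (k n) =
        (m:ℝ)^m * ∏ n ∈ k.support, x n ^ k n := by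
      rw [← Finset.prod_mul_distrib]
      have : ∀ n ∈ k.support, (k n : ℝ) ^ k n * (m * x n / (k n)) ^ (k n) =
          (m:ℝ)^(k n) * x n ^ k n := by
        intro n hn
        have h1 := hknd n hn
        rw [div_pow, mul_pow]
        field_simp
      rw [Finset.prod_congr rfl this, Finset.prod_mul_distrib,
        Finset.prod_pow_eq_pow_sum, ← hmsum]
    calc (m:ℝ)^m * ∏ n ∈ k.support, x n ^ k n
        = (∏ n ∈ k.support, (k n : ℝ) ^ k n) *
            ∏ n ∈ k.support, (m * x n / (k n)) ^ (k n) := hprod.symm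
      _ ≤ (∏ n ∈ k.support, (k n : ℝ) ^ k n) * (∑ n ∈ k.support, x n) ^ m := by
          apply mul_le_mul_of_nonneg_left key2
          apply Finset.prod_nonneg
          intro n hn
          exact pow_nonneg (hknd n hn).le _

private lemma exp_bound' (m : ℕ) : (m:ℝ)^m ≤ Real.exp m * m.factorial := by
  have h := Real.sum_le_exp_of_nonneg (x := (m:ℝ)) (Nat.cast_nonneg m) (m+1)
  have h2 : (m:ℝ)^m / m.factorial ≤ Real.exp m := by
    refine le_trans ?_ h
    have e : (m:ℝ)^m / m.factorial = ∑ i ∈ {m}, (m:ℝ)^i / i.factorial := by simp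
    rw [e]
    apply Finset.sum_le_sum_of_subset_of_nonneg
    · simp
    · intro i _ _; positivity
  have hf : (0:ℝ) < m.factorial := by positivity
  calc (m:ℝ)^m = ((m:ℝ)^m / m.factorial) * m.factorial := by field_simp
    _ ≤ Real.exp m * m.factorial := mul_le_mul_of_nonneg_right h2 hf.le

/-- `m^m ≤ e^m * multinomial * ∏ k^k`. -/
private lemma mm_le_mult (k : ℕ →₀ ℕ) :
    ((k.sum fun _ v => v : ℕ) : ℝ) ^ (k.sum fun _ v => v : ℕ) ≤
      Real.exp (k.sum fun _ v => v : ℕ) * (Nat.multinomial k.support k : ℝ) *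
        ∏ n ∈ k.support, (k n : ℝ) ^ k n := by
  set m : ℕ := k.sum fun _ v => v with hm
  have hmsum : m = ∑ n ∈ k.support, k n := rfl
  have h1 : (m:ℝ)^m ≤ Real.exp m * m.factorial := exp_bound' m
  have hspec : (∏ n ∈ k.support, (k n).factorial) * Nat.multinomial k.support k
      = m.factorial := by
    rw [hmsum]; exact Nat.multinomial_spec k.support k
  have h2 : (m.factorial : ℝ) =
      (∏ n ∈ k.support, ((k n).factorial : ℝ)) * (Nat.multinomial k.support k : ℝ) := by
    rw [← Nat.cast_prod, ← Nat.cast_mul, hspec]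
  have h3 : (∏ n ∈ k.support, ((k n).factorial : ℝ)) ≤ ∏ n ∈ k.support, (k n : ℝ) ^ k n := by
    apply Finset.prod_le_prod
    · intro n _; positivity
    · intro n _
      exact_mod_cast Nat.factorial_le_pow (k n)
  calc (m:ℝ)^m ≤ Real.exp m * m.factorial := h1
    _ = Real.exp m * ((∏ n ∈ k.support, ((k n).factorial : ℝ)) *
          (Nat.multinomial k.support k : ℝ)) := by rw [h2]
    _ ≤ Real.exp m * ((∏ n ∈ k.support, (k n : ℝ) ^ k n) *
          (Nat.multinomial k.support k : ℝ)) := by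
        apply mul_le_mul_of_nonneg_left _ (Real.exp_pos _).le
        apply mul_le_mul_of_nonneg_right h3 (Nat.cast_nonneg _)
    _ = Real.exp m * (Nat.multinomial k.support k : ℝ) *
          ∏ n ∈ k.support, (k n : ℝ) ^ k n := by ring

/-- extending a multinomial over a larger index set with zero values. -/
private lemma mult_extend {s t : Finset ℕ} (f : ℕ → ℕ) (hst : s ⊆ t)
    (hf : ∀ i ∈ t, i ∉ s → f i = 0) :
    Nat.multinomial t f = Nat.multinomial s f := by
  unfold Nat.multinomial
  rw [Finset.sum_subset hst hf, Finset.prod_subset hst]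
  intro i hi his
  rw [hf i hi his]
  rfl

/-- box-counting bound: a finite family of finsupps supported in `range N`. -/
private lemma box (N : ℕ) {x : ℝ} (hx0 : 0 ≤ x) (hx1 : x < 1) (u : Finset (ℕ →₀ ℕ))
    (hu : ∀ k ∈ u, k.support ⊆ Finset.range N) :
    ∑ k ∈ u, x ^ (k.sum fun _ v => v : ℕ) ≤ ((1-x)⁻¹) ^ N := by
  classical
  set J : ℕ := u.sup (fun k => k.sum fun _ v => v) with hJ
  have hsum : ∀ k ∈ u, (k.sum fun _ v => v : ℕ) = ∑ i ∈ Finset.range N, k i := by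
    intro k hk
    have : (k.sum fun _ v => v : ℕ) = ∑ n ∈ k.support, k n := rfl
    rw [this]
    apply Finset.sum_subset (hu k hk)
    intro i _ hi
    exact Finsupp.notMem_support_iff.mp hi
  have hle : ∀ k ∈ u, ∀ i, k i ≤ J := by
    intro k hk i
    rcases Nat.eq_zero_or_pos (k i) with h | h
    · omega
    · have hi : i ∈ k.support := Finsupp.mem_support_iff.mpr (Nat.pos_iff_ne_zero.mp h)
      have : k i ≤ (k.sum fun _ v => v : ℕ) := by
        rw [hsum k hk]
        have hiN : i ∈ Finset.range N := hu k hk hi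
        exact Finset.single_le_sum (fun j _ => Nat.zero_le _) hiN
      exact le_trans this (Finset.le_sup (f := fun k => k.sum fun _ v => v) hk)
  -- map into pi-type
  have key : ∑ k ∈ u, x ^ (k.sum fun _ v => v : ℕ)
      = ∑ k ∈ u, ∏ i : Fin N, x ^ (k i) := by
    apply Finset.sum_congr rfl
    intro k hk
    rw [hsum k hk, ← Fin.sum_univ_eq_sum_range (fun i => k i) N, ← Finset.prod_pow_eq_pow_sum]
  rw [key]
  have inj : Set.InjOn (fun (k : ℕ →₀ ℕ) => fun i : Fin N => k i) u := by
    intro k hk k' hk' h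
    ext n
    by_cases hn : n < N
    · exact congrFun h ⟨n, hn⟩
    · have h1 : n ∉ k.support := fun hmem => hn (Finset.mem_range.mp (hu k hk hmem))
      have h2 : n ∉ k'.support := fun hmem => hn (Finset.mem_range.mp (hu k' hk' hmem))
      rw [Finsupp.notMem_support_iff.mp h1, Finsupp.notMem_support_iff.mp h2]
  calc ∑ k ∈ u, ∏ i : Fin N, x ^ (k i)
      = ∑ f ∈ u.image (fun (k : ℕ →₀ ℕ) => fun i : Fin N => k i),
          ∏ i : Fin N, x ^ (f i) := by
        rw [Finset.sum_image (fun k hk k' hk' h => inj hk hk' h)]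
    _ ≤ ∑ f ∈ Fintype.piFinset (fun _ : Fin N => Finset.range (J+1)),
          ∏ i : Fin N, x ^ (f i) := by
        apply Finset.sum_le_sum_of_subset_of_nonneg
        · intro f hf
          rw [Finset.mem_image] at hf
          obtain ⟨k, hk, rfl⟩ := hf
          rw [Fintype.mem_piFinset]
          intro i
          rw [Finset.mem_range]
          exact Nat.lt_succ_of_le (hle k hk i)
        · intro f _ _
          exact Finset.prod_nonneg fun i _ => pow_nonneg hx0 _
    _ = ∏ i : Fin N, ∑ j ∈ Finset.range (J+1), x ^ j := by
        rw [Finset.prod_univ_sum]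
    _ ≤ ∏ i : Fin N, (1-x)⁻¹ := by
        apply Finset.prod_le_prod
        · intro i _
          exact Finset.sum_nonneg fun j _ => pow_nonneg hx0 _
        · intro i _
          have hsum' : ∑ j ∈ Finset.range (J+1), x ^ j ≤ ∑' j : ℕ, x ^ j :=
            Summable.sum_le_tsum _ (fun j _ => pow_nonneg hx0 _) (summable_geometric_of_lt_one hx0 hx1)
          rw [tsum_geometric_of_lt_one hx0 hx1] at hsum'
          exact hsum'
    _ = ((1-x)⁻¹) ^ N := by
        rw [Finset.prod_const, Finset.card_univ, Fintype.card_fin]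


private lemma pow_sub_pow' {A B : ℝ} (hB : 0 ≤ B) (hBA : B ≤ A) (m : ℕ) :
    A^(m+1) - B^(m+1) ≤ (m+1 : ℝ) * (A - B) * A^m := by
  induction m with
  | zero => simp
  | succ m ih =>
    have hA : 0 ≤ A := le_trans hB hBA
    have hBA' : B^(m+1) ≤ A^(m+1) := pow_le_pow_left₀ hB hBA _
    have h1 : A^(m+2) - B^(m+2) = A * (A^(m+1) - B^(m+1)) + B^(m+1) * (A - B) := by ring
    rw [h1]
    have h2 : A * (A^(m+1) - B^(m+1)) ≤ A * ((m+1 : ℝ) * (A - B) * A^m) :=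
      mul_le_mul_of_nonneg_left ih hA
    have h3 : B^(m+1) * (A - B) ≤ A^(m+1) * (A - B) :=
      mul_le_mul_of_nonneg_right hBA' (by linarith)
    calc A * (A^(m+1) - B^(m+1)) + B^(m+1) * (A - B)
        ≤ A * ((m+1 : ℝ) * (A - B) * A^m) + A^(m+1) * (A - B) := by linarith
      _ = ((m+1 : ℕ) + 1 : ℝ) * (A - B) * A^(m+1) := by push_cast; ring

private lemma sum_m_half' (T : ℕ) : ∑ m ∈ Finset.range T, (m:ℝ) * (1/2)^m ≤ 2 := by
  have hs : Summable (fun m : ℕ => (m:ℝ) * (1/2)^m) := by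
    have := hasSum_coe_mul_geometric_of_norm_lt_one (𝕜 := ℝ) (r := 1/2) (by norm_num)
    exact this.summable
  have htsum : ∑' m : ℕ, (m:ℝ) * (1/2)^m = (1/2) / (1 - 1/2)^2 :=
    tsum_coe_mul_geometric_of_norm_lt_one (by norm_num)
  have h := Summable.sum_le_tsum (Finset.range T) (fun m _ => by positivity) hs
  rw [htsum] at h
  norm_num at h
  exact h

/-- Tail estimate for multinomial-weighted sums. -/
private lemma tailsum (N N' : ℕ) (y : ℕ → ℝ) (hy : ∀ n, 0 ≤ y n) (θf : ℝ) (hθf0 : 0 ≤ θf)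
    (hθ : ∀ F : Finset ℕ, (∀ n ∈ F, N ≤ n) → ∑ n ∈ F, y n ≤ 1/2)
    (hθf : ∀ F : Finset ℕ, (∀ n ∈ F, N' ≤ n) → ∑ n ∈ F, y n ≤ θf)
    (v : Finset (ℕ →₀ ℕ))
    (hv : ∀ b ∈ v, (∀ n ∈ b.support, N ≤ n) ∧ ∃ n ∈ b.support, N' ≤ n) :
    ∑ b ∈ v, (Nat.multinomial b.support b : ℝ) * ∏ n ∈ b.support, y n ^ b n ≤ 4 * θf := by
  classical
  set F : Finset ℕ := v.biUnion Finsupp.support with hF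
  have hsuppF : ∀ b ∈ v, b.support ⊆ F := by
    intro b hb n hn
    exact Finset.mem_biUnion.mpr ⟨b, hb, hn⟩
  have hFN : ∀ n ∈ F, N ≤ n := by
    intro n hn
    obtain ⟨b, hb, hnb⟩ := Finset.mem_biUnion.mp hn
    exact (hv b hb).1 n hnb
  set Fmid : Finset ℕ := F.filter (fun n => n < N') with hFmid
  set A : ℝ := ∑ n ∈ F, y n with hA
  set B : ℝ := ∑ n ∈ Fmid, y n with hB
  have hA2 : A ≤ 1/2 := hθ F hFN
  have hB0 : 0 ≤ B := Finset.sum_nonneg fun n _ => hy n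
  have hBA : B ≤ A :=
    Finset.sum_le_sum_of_subset_of_nonneg (Finset.filter_subset _ _) fun n _ _ => hy n
  have hA0 : 0 ≤ A := le_trans hB0 hBA
  have hABf : A - B ≤ θf := by
    have hsd : ∑ n ∈ F \ Fmid, y n + ∑ n ∈ Fmid, y n = ∑ n ∈ F, y n :=
      Finset.sum_sdiff (Finset.filter_subset _ _)
    have : A - B = ∑ n ∈ F \ Fmid, y n := by rw [hA, hB, ← hsd]; ring
    rw [this]
    apply hθf
    intro n hn
    rw [Finset.mem_sdiff, hFmid, Finset.mem_filter] at hn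
    push_neg at hn
    exact hn.2 hn.1
  set S : (ℕ →₀ ℕ) → ℕ := fun b => b.sum fun _ v => v with hS
  set J : ℕ := v.sup S with hJ
  -- fiberwise decomposition
  have hfib : ∑ b ∈ v, (Nat.multinomial b.support b : ℝ) * ∏ n ∈ b.support, y n ^ b n
      = ∑ m ∈ Finset.range (J+1), ∑ b ∈ v.filter (fun b => S b = m),
          (Nat.multinomial b.support b : ℝ) * ∏ n ∈ b.support, y n ^ b n := by
    rw [Finset.sum_fiberwise_of_maps_to]
    intro b hb
    exact Finset.mem_range.mpr (Nat.lt_succ_of_le (Finset.le_sup hb))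
  rw [hfib]
  -- per-fiber estimate
  have claim : ∀ m ∈ Finset.range (J+1),
      ∑ b ∈ v.filter (fun b => S b = m),
        (Nat.multinomial b.support b : ℝ) * ∏ n ∈ b.support, y n ^ b n
      ≤ A^m - B^m := by
    intro m _
    have hval : ∀ b ∈ v.filter (fun b => S b = m),
        (Nat.multinomial b.support b : ℝ) * ∏ n ∈ b.support, y n ^ b n
        = (Nat.multinomial F b : ℝ) * ∏ n ∈ F, y n ^ b n := by
      intro b hb
      rw [Finset.mem_filter] at hb
      have h1 : Nat.multinomial F ⇑b = Nat.multinomial b.support ⇑b :=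
        mult_extend _ (hsuppF b hb.1) (fun i _ his => Finsupp.notMem_support_iff.mp his)
      have h2 : ∏ n ∈ F, y n ^ b n = ∏ n ∈ b.support, y n ^ b n := by
        symm
        apply Finset.prod_subset (hsuppF b hb.1)
        intro i _ his
        rw [Finsupp.notMem_support_iff.mp his, pow_zero]
      rw [h1, h2]
    rw [Finset.sum_congr rfl hval]
    -- image under coe into piAntidiag
    have hinj : Set.InjOn (fun (b : ℕ →₀ ℕ) => ⇑b) (v.filter (fun b => S b = m)) :=
      fun b _ b' _ h => DFunLike.coe_injective h
    rw [← Finset.sum_image (f := fun g : ℕ → ℕ => (Nat.multinomial F g : ℝ) * ∏ n ∈ F, y n ^ g n)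
      (fun b hb b' hb' h => hinj hb hb' h)]
    have hsub : (v.filter (fun b => S b = m)).image (fun (b : ℕ →₀ ℕ) => ⇑b)
        ⊆ (F.piAntidiag m) \ (Fmid.piAntidiag m) := by
      intro g hg
      rw [Finset.mem_image] at hg
      obtain ⟨b, hb, rfl⟩ := hg
      rw [Finset.mem_filter] at hb
      rw [Finset.mem_sdiff, Finset.mem_piAntidiag, Finset.mem_piAntidiag]
      refine ⟨⟨?_, fun i hi => hsuppF b hb.1 (Finsupp.mem_support_iff.mpr hi)⟩, ?_⟩
      · rw [← hb.2]
        have : S b = ∑ n ∈ b.support, b n := rfl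
        rw [this]
        symm
        apply Finset.sum_subset (hsuppF b hb.1)
        intro i _ his
        exact Finsupp.notMem_support_iff.mp his
      · rintro ⟨-, hmem⟩
        obtain ⟨n, hn, hNn⟩ := (hv b hb.1).2
        have := hmem n (Finsupp.mem_support_iff.mp hn)
        rw [hFmid, Finset.mem_filter] at this
        omega
    have hsum1 : ∑ g ∈ F.piAntidiag m, (Nat.multinomial F g : ℝ) * ∏ n ∈ F, y n ^ g n
        = A^m := (Finset.sum_pow_eq_sum_piAntidiag F y m).symm
    have hsum2 : ∑ g ∈ Fmid.piAntidiag m, (Nat.multinomial F g : ℝ) * ∏ n ∈ F, y n ^ g n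
        = B^m := by
      have : ∀ g ∈ Fmid.piAntidiag m,
          (Nat.multinomial F g : ℝ) * ∏ n ∈ F, y n ^ g n
          = (Nat.multinomial Fmid g : ℝ) * ∏ n ∈ Fmid, y n ^ g n := by
        intro g hg
        rw [Finset.mem_piAntidiag] at hg
        have hsupp : ∀ i ∈ F, i ∉ Fmid → g i = 0 := by
          intro i _ hi
          by_contra h
          exact hi (hg.2 i h)
        rw [mult_extend _ (Finset.filter_subset _ _) hsupp,
          (Finset.prod_subset (Finset.filter_subset _ _) (fun i hi his => by
            rw [hsupp i hi his, pow_zero])).symm]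
      rw [Finset.sum_congr rfl this]
      exact (Finset.sum_pow_eq_sum_piAntidiag Fmid y m).symm
    have hmono : (Fmid.piAntidiag m) ⊆ (F.piAntidiag m) := by
      intro g hg
      rw [Finset.mem_piAntidiag] at hg ⊢
      refine ⟨?_, fun i hi => Finset.filter_subset _ _ (hg.2 i hi)⟩
      rw [← hg.1]
      symm
      apply Finset.sum_subset (Finset.filter_subset _ _)
      intro i _ hi
      by_contra h
      exact hi (hg.2 i h)
    have hnn : ∀ g ∈ (F.piAntidiag m) \ (Fmid.piAntidiag m),
        0 ≤ (Nat.multinomial F g : ℝ) * ∏ n ∈ F, y n ^ g n := by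
      intro g _
      apply mul_nonneg (Nat.cast_nonneg _)
      exact Finset.prod_nonneg fun n _ => pow_nonneg (hy n) _
    calc ∑ g ∈ (v.filter (fun b => S b = m)).image (fun (b : ℕ →₀ ℕ) => ⇑b),
          (Nat.multinomial F g : ℝ) * ∏ n ∈ F, y n ^ g n
        ≤ ∑ g ∈ (F.piAntidiag m) \ (Fmid.piAntidiag m),
          (Nat.multinomial F g : ℝ) * ∏ n ∈ F, y n ^ g n := by
          apply Finset.sum_le_sum_of_subset_of_nonneg hsub
          intro g hg _
          exact hnn g hg
      _ = A^m - B^m := by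
          have := Finset.sum_sdiff (f := fun g : ℕ → ℕ =>
            (Nat.multinomial F g : ℝ) * ∏ n ∈ F, y n ^ g n) hmono
          rw [hsum2] at this
          -- this : ∑_{sdiff} + B^m = ∑_{F.piAntidiag m} ...
          rw [hsum1] at this
          linarith
  calc ∑ m ∈ Finset.range (J+1), ∑ b ∈ v.filter (fun b => S b = m),
        (Nat.multinomial b.support b : ℝ) * ∏ n ∈ b.support, y n ^ b n
      ≤ ∑ m ∈ Finset.range (J+1), (A^m - B^m) := Finset.sum_le_sum claim
    _ ≤ 4 * θf := by
        rw [Finset.sum_range_succ']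
        simp only [pow_zero, sub_self, add_zero]
        have hstep : ∀ m ∈ Finset.range J, A^(m+1) - B^(m+1)
            ≤ (A - B) * ((m:ℝ) * (1/2)^m + (1/2)^m) := by
          intro m _
          have h1 := pow_sub_pow' hB0 hBA m
          have h2 : A^m ≤ (1/2)^m := pow_le_pow_left₀ hA0 hA2 m
          have h3 : ((m:ℝ)+1) * (A - B) * A^m ≤ ((m:ℝ)+1) * (A - B) * (1/2)^m := by
            apply mul_le_mul_of_nonneg_left h2
            have : (0:ℝ) ≤ A - B := by linarith
            positivity
          calc A^(m+1) - B^(m+1) ≤ ((m:ℝ)+1) * (A - B) * A^m := h1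
            _ ≤ ((m:ℝ)+1) * (A - B) * (1/2)^m := h3
            _ = (A - B) * ((m:ℝ) * (1/2)^m + (1/2)^m) := by ring
        calc ∑ m ∈ Finset.range J, (A^(m+1) - B^(m+1))
            ≤ ∑ m ∈ Finset.range J, (A - B) * ((m:ℝ) * (1/2)^m + (1/2)^m) :=
              Finset.sum_le_sum hstep
          _ = (A - B) * (∑ m ∈ Finset.range J, (m:ℝ) * (1/2)^m
                + ∑ m ∈ Finset.range J, ((1:ℝ)/2)^m) := by
              rw [← Finset.sum_add_distrib, Finset.mul_sum]
          _ ≤ (A - B) * (2 + 2) := by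
              apply mul_le_mul_of_nonneg_left _ (by linarith : (0:ℝ) ≤ A - B)
              have g1 := sum_m_half' J
              have g2 : ∑ m ∈ Finset.range J, ((1:ℝ)/2)^m ≤ 2 := by
                have := Summable.sum_le_tsum (Finset.range J)
                  (fun m _ => by positivity : ∀ m ∉ Finset.range J, (0:ℝ) ≤ (1/2)^m)
                  (summable_geometric_of_lt_one (by norm_num) (by norm_num : (1:ℝ)/2 < 1))
                rw [tsum_geometric_of_lt_one (by norm_num) (by norm_num)] at this
                norm_num at this
                exact this
              linarith
          _ ≤ 4 * θf := by nlinarith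

private lemma lp_abs_summable (z : lp (fun _ : ℕ => ℂ) 1) :
    Summable fun n => ‖z n‖ := by
  have h := (lp.memℓp z).summable (p := 1) (by norm_num)
  simpa [Real.rpow_one] using h

private lemma lp_norm_eq (z : lp (fun _ : ℕ => ℂ) 1) :
    ‖z‖ = ∑' n, ‖z n‖ := by
  rw [lp.norm_eq_tsum_rpow (by norm_num) z]
  simp

private lemma lp_finsum_le (z : lp (fun _ : ℕ => ℂ) 1) (Fi : Finset ℕ) :
    ∑ n ∈ Fi, ‖z n‖ ≤ ‖z‖ := by
  rw [lp_norm_eq z]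
  exact Summable.sum_le_tsum Fi (fun n _ => (norm_nonneg _)) (lp_abs_summable z)

private lemma tail_nonneg (z : lp (fun _ : ℕ => ℂ) 1) (N : ℕ) :
    0 ≤ ∑' n : ℕ, ‖z (n+N)‖ :=
  tsum_nonneg fun n => norm_nonneg _

private lemma tail_summable (z : lp (fun _ : ℕ => ℂ) 1) (N : ℕ) :
    Summable fun n : ℕ => ‖z (n+N)‖ :=
  (summable_nat_add_iff N).mpr (lp_abs_summable z)

private lemma tail_le_norm (z : lp (fun _ : ℕ => ℂ) 1) (N : ℕ) :
    ∑' n : ℕ, ‖z (n+N)‖ ≤ ‖z‖ := by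
  have h := Summable.sum_add_tsum_nat_add (f := fun n => ‖z n‖) N (lp_abs_summable z)
  have h2 : 0 ≤ ∑ i ∈ Finset.range N, ‖z i‖ :=
    Finset.sum_nonneg fun i _ => norm_nonneg _
  rw [lp_norm_eq z]
  linarith

/-- finite sums over far index sets are bounded by the tail. -/
private lemma far_sum_le_tail (z : lp (fun _ : ℕ => ℂ) 1) (N : ℕ) (F : Finset ℕ)
    (hF : ∀ n ∈ F, N ≤ n) :
    ∑ n ∈ F, ‖z n‖ ≤ ∑' n : ℕ, ‖z (n+N)‖ := by
  have hinj : Set.InjOn (fun n => n - N) F := by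
    intro a ha b hb h
    have ha' := hF a ha
    have hb' := hF b hb
    simp only at h
    omega
  have h1 : ∑ n ∈ F, ‖z n‖
      = ∑ j ∈ F.image (fun n => n - N), ‖z (j+N)‖ := by
    rw [Finset.sum_image (fun a ha b hb h => hinj ha hb h)]
    apply Finset.sum_congr rfl
    intro n hn
    rw [Nat.sub_add_cancel (hF n hn)]
  rw [h1]
  exact Summable.sum_le_tsum _ (fun j _ => norm_nonneg _) (tail_summable z N)

private lemma tail_tendsto (z : lp (fun _ : ℕ => ℂ) 1) :
    Tendsto (fun N => ∑' n : ℕ, ‖z (n+N)‖) atTop (nhds 0) := by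
  have hs := lp_abs_summable z
  have heq : ∀ N, ∑' n : ℕ, ‖z (n+N)‖
      = (∑' n, ‖z n‖) - ∑ i ∈ Finset.range N, ‖z i‖ := by
    intro N
    have := Summable.sum_add_tsum_nat_add (f := fun n => ‖z n‖) N hs
    linarith
  simp_rw [heq]
  have hpart := hs.hasSum.tendsto_sum_nat
  have := Tendsto.sub (tendsto_const_nhds (x := ∑' n, ‖z n‖)) hpart
  simpa using this

/-- uniform tails on a compact set. -/
private lemma uniform_tail {K : Set (ℂ × lp (fun _ : ℕ => ℂ) 1)} (hK : IsCompact K)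
    {η : ℝ} (hη : 0 < η) :
    ∃ N : ℕ, ∀ p ∈ K, ∑' n : ℕ, ‖p.2 (n+N)‖ ≤ η := by
  set V : lp (fun _ : ℕ => ℂ) 1 → Set (ℂ × lp (fun _ : ℕ => ℂ) 1) :=
    fun w => {p | ‖p.2 - w‖ < η/2} with hV
  have hopen : ∀ w, IsOpen (V w) := by
    intro w
    have : V w = (fun p : ℂ × lp (fun _ : ℕ => ℂ) 1 => ‖p.2 - w‖) ⁻¹' (Set.Iio (η/2)) := rfl
    rw [this]
    exact IsOpen.preimage ((continuous_snd.sub continuous_const).norm) isOpen_Iio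
  have hcover : K ⊆ ⋃ w : lp (fun _ : ℕ => ℂ) 1, V w := by
    intro p _
    refine Set.mem_iUnion.mpr ⟨p.2, ?_⟩
    simp [hV, hη]
  obtain ⟨t, ht⟩ := hK.elim_finite_subcover V hopen hcover
  have hev : ∀ᶠ N in atTop, ∀ w ∈ t, (∑' n : ℕ, ‖w (n+N)‖) < η/2 := by
    rw [eventually_all_finset]
    intro w _
    exact (tail_tendsto w).eventually_lt_const (by linarith)
  obtain ⟨N, hN⟩ := hev.exists
  refine ⟨N, fun p hp => ?_⟩
  obtain ⟨w, hw, hpw⟩ := Set.mem_iUnion₂.mp (ht hp)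
  have hpw' : ‖p.2 - w‖ < η/2 := hpw
  have htri : ∀ n : ℕ, ‖p.2 (n+N)‖
      ≤ ‖w (n+N)‖ + ‖(p.2 - w) (n+N)‖ := by
    intro n
    have hco : (p.2 - w) (n+N) = p.2 (n+N) - w (n+N) := by
      rw [lp.coeFn_sub]; rfl
    rw [hco]
    calc ‖p.2 (n+N)‖
        = ‖w (n+N) + (p.2 (n+N) - w (n+N))‖ := by ring_nf
      _ ≤ ‖w (n+N)‖ + ‖p.2 (n+N) - w (n+N)‖ :=
          norm_add_le _ _
  have hsum : ∑' n : ℕ, ‖p.2 (n+N)‖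
      ≤ ∑' n : ℕ, (‖w (n+N)‖ + ‖(p.2 - w) (n+N)‖) := by
    apply Summable.tsum_le_tsum htri (tail_summable p.2 N)
    exact (tail_summable w N).add (tail_summable (p.2 - w) N)
  rw [Summable.tsum_add (tail_summable w N) (tail_summable (p.2 - w) N)] at hsum
  have h2 : ∑' n : ℕ, ‖(p.2 - w) (n+N)‖ ≤ ‖p.2 - w‖ := tail_le_norm _ N
  have h3 := hN w hw
  linarith

private lemma kk_pos (k : ℕ →₀ ℕ) : 0 < ∏ n ∈ k.support, (k n : ℝ) ^ k n := by
  apply Finset.prod_pos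
  intro n hn
  have : 0 < k n := Nat.pos_of_ne_zero (Finsupp.mem_support_iff.mp hn)
  positivity

/-- the universal per-term bound `term ≤ C^#k * r^‖k‖`. -/
private lemma term_bound {C r : ℝ} (hC : 1 ≤ C) (hr0 : 0 ≤ r)
    {z : ℕ → ℝ} (hz : ∀ n, 0 ≤ z n) {q : ℝ} (hq0 : 0 ≤ q) (hqC : q ≤ C)
    (hzr : ∀ F : Finset ℕ, ∑ n ∈ F, z n ≤ r) (k : ℕ →₀ ℕ) :
    (((k.sum fun _ v => v : ℕ) : ℝ) ^ (k.sum fun _ v => v : ℕ) /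
        ∏ n ∈ k.support, (k n : ℝ) ^ k n) * q ^ k.support.card *
      ∏ n ∈ k.support, (z n) ^ k n
    ≤ C ^ k.support.card * r ^ (k.sum fun _ v => v : ℕ) := by
  set m : ℕ := k.sum fun _ v => v with hm
  set kk : ℝ := ∏ n ∈ k.support, (k n : ℝ) ^ k n with hkk
  have hkk0 : 0 < kk := kk_pos k
  have hP0 : 0 ≤ ∏ n ∈ k.support, (z n) ^ k n :=
    Finset.prod_nonneg fun n _ => pow_nonneg (hz n) _
  have hsz : 0 ≤ ∑ n ∈ k.support, z n := Finset.sum_nonneg fun n _ => hz n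
  have h1 : (m:ℝ)^m * ∏ n ∈ k.support, (z n) ^ k n ≤ kk * r^m := by
    calc (m:ℝ)^m * ∏ n ∈ k.support, (z n) ^ k n
        ≤ kk * (∑ n ∈ k.support, z n)^m := amgm k z hz
      _ ≤ kk * r^m := by
          apply mul_le_mul_of_nonneg_left _ hkk0.le
          exact pow_le_pow_left₀ hsz (hzr _) m
  have h2 : q ^ k.support.card ≤ C ^ k.support.card := pow_le_pow_left₀ hq0 hqC _
  have h3 : ((m:ℝ)^m / kk) * ∏ n ∈ k.support, (z n) ^ k n ≤ r^m := by
    rw [div_mul_eq_mul_div, div_le_iff₀ hkk0]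
    calc (m:ℝ)^m * ∏ n ∈ k.support, (z n) ^ k n ≤ kk * r^m := h1
      _ = r^m * kk := by ring
  calc ((m:ℝ)^m / kk) * q ^ k.support.card * ∏ n ∈ k.support, (z n) ^ k n
      = q ^ k.support.card * (((m:ℝ)^m / kk) * ∏ n ∈ k.support, (z n) ^ k n) := by ring
    _ ≤ C ^ k.support.card * r^m := by
        refine mul_le_mul h2 h3 ?_ (by positivity)
        exact mul_nonneg (div_nonneg (by positivity) hkk0.le) hP0

/-- The per-term head/tail splitting estimate. -/
private lemma term_split {δ C r : ℝ} (hδ : 0 < δ) (hC : 1 ≤ C) (hr0 : 0 ≤ r)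
    (N : ℕ) {z : ℕ → ℝ} (hz : ∀ n, 0 ≤ z n) {q : ℝ} (hq0 : 0 ≤ q) (hqC : q ≤ C)
    (hzr : ∀ F : Finset ℕ, ∑ n ∈ F, z n ≤ r) (k : ℕ →₀ ℕ) :
    (((k.sum fun _ v => v : ℕ) : ℝ) ^ (k.sum fun _ v => v : ℕ) /
        ∏ n ∈ k.support, (k n : ℝ) ^ k n) * q ^ k.support.card *
      ∏ n ∈ k.support, (z n) ^ k n
    ≤ (C^N * (Real.exp δ * r) ^ ((k.filter fun n => n < N).sum fun _ v => v : ℕ)) *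
      ((Nat.multinomial (k.filter fun n => ¬ n < N).support (k.filter fun n => ¬ n < N) : ℝ) *
        ∏ n ∈ (k.filter fun n => ¬ n < N).support,
          ((Real.exp (2+1/δ) * C) * z n) ^ (k.filter fun n => ¬ n < N) n) := by
  classical
  set a : ℕ →₀ ℕ := k.filter fun n => n < N with ha
  set b : ℕ →₀ ℕ := k.filter fun n => ¬ n < N with hb
  have hab : a + b = k := Finsupp.filter_pos_add_filter_neg k _
  set Sa : ℕ := a.sum fun _ v => v with hSa
  set Sb : ℕ := b.sum fun _ v => v with hSb
  have hSk : (k.sum fun _ v => v : ℕ) = Sa + Sb := by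
    rw [← hab]
    exact Finsupp.sum_add_index' (fun _ => rfl) (fun _ _ _ => rfl)
  have ha_supp : a.support = k.support.filter (fun n => n < N) :=
    Finsupp.support_filter _ _
  have hb_supp : b.support = k.support.filter (fun n => ¬ n < N) :=
    Finsupp.support_filter _ _
  have ha_val : ∀ n ∈ a.support, a n = k n := by
    intro n hn
    rw [ha_supp, Finset.mem_filter] at hn
    exact Finsupp.filter_apply_pos _ _ hn.2
  have hb_val : ∀ n ∈ b.support, b n = k n := by
    intro n hn
    rw [hb_supp, Finset.mem_filter] at hn
    exact Finsupp.filter_apply_pos _ _ hn.2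
  -- splitting of products over the support
  have hprod : ∀ F : ℕ → ℕ → ℝ, ∏ n ∈ k.support, F n (k n)
      = (∏ n ∈ a.support, F n (a n)) * ∏ n ∈ b.support, F n (b n) := by
    intro F
    rw [← Finset.prod_filter_mul_prod_filter_not k.support (fun n => n < N)]
    rw [ha_supp, hb_supp]
    congr 1
    · apply Finset.prod_congr rfl
      intro n hn
      rw [ha_val n (by rwa [ha_supp])]
    · apply Finset.prod_congr rfl
      intro n hn
      rw [hb_val n (by rwa [hb_supp])]
  have hcard : k.support.card = a.support.card + b.support.card := by
    rw [ha_supp, hb_supp]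
    exact (Finset.card_filter_add_card_filter_not _).symm
  -- positivity facts
  have hkka : 0 < ∏ n ∈ a.support, (a n : ℝ) ^ a n := kk_pos a
  have hkkb : 0 < ∏ n ∈ b.support, (b n : ℝ) ^ b n := kk_pos b
  have hPa0 : 0 ≤ ∏ n ∈ a.support, (z n) ^ a n :=
    Finset.prod_nonneg fun n _ => pow_nonneg (hz n) _
  have hPb0 : 0 ≤ ∏ n ∈ b.support, (z n) ^ b n :=
    Finset.prod_nonneg fun n _ => pow_nonneg (hz n) _
  -- head estimate
  have HA : Real.exp (δ * Sa) *
      (((Sa:ℝ)^Sa / ∏ n ∈ a.support, (a n : ℝ) ^ a n) * q ^ a.support.card *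
        ∏ n ∈ a.support, (z n) ^ a n)
      ≤ C^N * (Real.exp δ * r) ^ Sa := by
    have h1 : ((Sa:ℝ)^Sa / ∏ n ∈ a.support, (a n : ℝ) ^ a n) *
        ∏ n ∈ a.support, (z n) ^ a n ≤ r ^ Sa := by
      rw [div_mul_eq_mul_div, div_le_iff₀ hkka]
      calc (Sa:ℝ)^Sa * ∏ n ∈ a.support, (z n) ^ a n
          ≤ (∏ n ∈ a.support, (a n : ℝ) ^ a n) * (∑ n ∈ a.support, z n) ^ Sa := amgm a z hz
        _ ≤ (∏ n ∈ a.support, (a n : ℝ) ^ a n) * r ^ Sa := by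
            apply mul_le_mul_of_nonneg_left _ hkka.le
            exact pow_le_pow_left₀ (Finset.sum_nonneg fun n _ => hz n) (hzr _) _
        _ = r ^ Sa * ∏ n ∈ a.support, (a n : ℝ) ^ a n := by ring
    have h2 : q ^ a.support.card ≤ C ^ N := by
      have hcard_le : a.support.card ≤ N := by
        have : a.support ⊆ Finset.range N := by
          intro n hn
          rw [ha_supp, Finset.mem_filter] at hn
          exact Finset.mem_range.mpr hn.2
        calc a.support.card ≤ (Finset.range N).card := Finset.card_le_card this
          _ = N := Finset.card_range N
      calc q ^ a.support.card ≤ C ^ a.support.card := pow_le_pow_left₀ hq0 hqC _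
        _ ≤ C ^ N := pow_le_pow_right₀ hC hcard_le
    have h3 : Real.exp (δ * Sa) = (Real.exp δ) ^ Sa := by
      rw [mul_comm, Real.exp_nat_mul]
    calc Real.exp (δ * Sa) *
        (((Sa:ℝ)^Sa / ∏ n ∈ a.support, (a n : ℝ) ^ a n) * q ^ a.support.card *
          ∏ n ∈ a.support, (z n) ^ a n)
        = Real.exp (δ * Sa) * (q ^ a.support.card *
            (((Sa:ℝ)^Sa / ∏ n ∈ a.support, (a n : ℝ) ^ a n) *
              ∏ n ∈ a.support, (z n) ^ a n)) := by ring
      _ ≤ Real.exp (δ * Sa) * (C^N * r ^ Sa) := by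
          apply mul_le_mul_of_nonneg_left _ (Real.exp_pos _).le
          apply mul_le_mul h2 h1 _ (by positivity)
          exact mul_nonneg (div_nonneg (by positivity) hkka.le) hPa0
      _ = C^N * (Real.exp δ * r) ^ Sa := by
          rw [mul_pow, h3]; ring
  -- tail estimate
  have HB : Real.exp ((1+1/δ) * Sb) *
      (((Sb:ℝ)^Sb / ∏ n ∈ b.support, (b n : ℝ) ^ b n) * q ^ b.support.card *
        ∏ n ∈ b.support, (z n) ^ b n)
      ≤ (Nat.multinomial b.support b : ℝ) *
          ∏ n ∈ b.support, ((Real.exp (2+1/δ) * C) * z n) ^ b n := by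
    have h1 : ((Sb:ℝ)^Sb / ∏ n ∈ b.support, (b n : ℝ) ^ b n)
        ≤ Real.exp Sb * (Nat.multinomial b.support b : ℝ) := by
      rw [div_le_iff₀ hkkb]
      exact mm_le_mult b
    have hcb : b.support.card ≤ Sb := by
      have : Sb = ∑ n ∈ b.support, b n := rfl
      rw [this, Finset.card_eq_sum_ones]
      apply Finset.sum_le_sum
      intro n hn
      exact Nat.one_le_iff_ne_zero.mpr (Finsupp.mem_support_iff.mp hn)
    have h2 : q ^ b.support.card ≤ C ^ Sb := by
      calc q ^ b.support.card ≤ C ^ b.support.card := pow_le_pow_left₀ hq0 hqC _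
        _ ≤ C ^ Sb := pow_le_pow_right₀ hC hcb
    have key : Real.exp ((1+1/δ) * Sb) * Real.exp Sb * C ^ Sb *
        ∏ n ∈ b.support, (z n) ^ b n
        = ∏ n ∈ b.support, ((Real.exp (2+1/δ) * C) * z n) ^ b n := by
      have e1 : Real.exp ((1+1/δ) * Sb) * Real.exp Sb = (Real.exp (2+1/δ)) ^ Sb := by
        rw [← Real.exp_add, ← Real.exp_nat_mul (2+1/δ) Sb]
        congr 1
        push_cast
        ring
      have e2 : (Real.exp (2+1/δ)) ^ Sb = ∏ n ∈ b.support, (Real.exp (2+1/δ)) ^ b n := by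
        rw [Finset.prod_pow_eq_pow_sum]
        rfl
      have e3 : C ^ Sb = ∏ n ∈ b.support, C ^ b n := by
        rw [Finset.prod_pow_eq_pow_sum]
        rfl
      rw [e1, e2, e3, ← Finset.prod_mul_distrib, ← Finset.prod_mul_distrib]
      apply Finset.prod_congr rfl
      intro n _
      rw [mul_pow, mul_pow]
    calc Real.exp ((1+1/δ) * Sb) *
        (((Sb:ℝ)^Sb / ∏ n ∈ b.support, (b n : ℝ) ^ b n) * q ^ b.support.card *
          ∏ n ∈ b.support, (z n) ^ b n)
        ≤ Real.exp ((1+1/δ) * Sb) *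
          ((Real.exp Sb * (Nat.multinomial b.support b : ℝ)) * C ^ Sb *
            ∏ n ∈ b.support, (z n) ^ b n) := by
          apply mul_le_mul_of_nonneg_left _ (Real.exp_pos _).le
          apply mul_le_mul_of_nonneg_right _ hPb0
          apply mul_le_mul h1 h2 (by positivity) _
          positivity
      _ = (Nat.multinomial b.support b : ℝ) *
            (Real.exp ((1+1/δ) * Sb) * Real.exp Sb * C ^ Sb *
              ∏ n ∈ b.support, (z n) ^ b n) := by ring
      _ = (Nat.multinomial b.support b : ℝ) *
            ∏ n ∈ b.support, ((Real.exp (2+1/δ) * C) * z n) ^ b n := by rw [key]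
  -- combine
  have hmm : (((k.sum fun _ v => v : ℕ) : ℝ) ^ (k.sum fun _ v => v : ℕ))
      ≤ Real.exp (δ * Sa) * Real.exp ((1+1/δ) * Sb) * ((Sa:ℝ)^Sa * (Sb:ℝ)^Sb) := by
    rw [hSk]
    exact_mod_cast pow_split hδ Sa Sb
  have hkk_split : (∏ n ∈ k.support, (k n : ℝ) ^ k n)
      = (∏ n ∈ a.support, (a n : ℝ) ^ a n) * ∏ n ∈ b.support, (b n : ℝ) ^ b n :=
    hprod (fun n v => (v:ℝ)^v)
  have hP_split : (∏ n ∈ k.support, (z n) ^ k n)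
      = (∏ n ∈ a.support, (z n) ^ a n) * ∏ n ∈ b.support, (z n) ^ b n :=
    hprod (fun n v => (z n)^v)
  have hq_split : q ^ k.support.card = q ^ a.support.card * q ^ b.support.card := by
    rw [hcard, pow_add]
  have hstep : (((k.sum fun _ v => v : ℕ) : ℝ) ^ (k.sum fun _ v => v : ℕ) /
        ∏ n ∈ k.support, (k n : ℝ) ^ k n) * q ^ k.support.card *
      ∏ n ∈ k.support, (z n) ^ k n
      ≤ (Real.exp (δ * Sa) *
          (((Sa:ℝ)^Sa / ∏ n ∈ a.support, (a n : ℝ) ^ a n) * q ^ a.support.card *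
            ∏ n ∈ a.support, (z n) ^ a n)) *
        (Real.exp ((1+1/δ) * Sb) *
          (((Sb:ℝ)^Sb / ∏ n ∈ b.support, (b n : ℝ) ^ b n) * q ^ b.support.card *
            ∏ n ∈ b.support, (z n) ^ b n)) := by
    rw [hkk_split, hP_split, hq_split]
    have e_lhs : (((k.sum fun _ v => v : ℕ) : ℝ) ^ (k.sum fun _ v => v : ℕ) /
          ((∏ n ∈ a.support, (a n : ℝ) ^ a n) * ∏ n ∈ b.support, (b n : ℝ) ^ b n)) *
        (q ^ a.support.card * q ^ b.support.card) *
        ((∏ n ∈ a.support, (z n) ^ a n) * ∏ n ∈ b.support, (z n) ^ b n)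
        = ((k.sum fun _ v => v : ℕ) : ℝ) ^ (k.sum fun _ v => v : ℕ) *
          ((q ^ a.support.card * q ^ b.support.card) *
            ((∏ n ∈ a.support, (z n) ^ a n) * ∏ n ∈ b.support, (z n) ^ b n) /
            ((∏ n ∈ a.support, (a n : ℝ) ^ a n) * ∏ n ∈ b.support, (b n : ℝ) ^ b n)) := by
      field_simp
    have e_rhs : (Real.exp (δ * Sa) *
          (((Sa:ℝ)^Sa / ∏ n ∈ a.support, (a n : ℝ) ^ a n) * q ^ a.support.card *
            ∏ n ∈ a.support, (z n) ^ a n)) *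
        (Real.exp ((1+1/δ) * Sb) *
          (((Sb:ℝ)^Sb / ∏ n ∈ b.support, (b n : ℝ) ^ b n) * q ^ b.support.card *
            ∏ n ∈ b.support, (z n) ^ b n))
        = (Real.exp (δ * Sa) * Real.exp ((1+1/δ) * Sb) * ((Sa:ℝ)^Sa * (Sb:ℝ)^Sb)) *
          ((q ^ a.support.card * q ^ b.support.card) *
            ((∏ n ∈ a.support, (z n) ^ a n) * ∏ n ∈ b.support, (z n) ^ b n) /
            ((∏ n ∈ a.support, (a n : ℝ) ^ a n) * ∏ n ∈ b.support, (b n : ℝ) ^ b n)) := by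
      ring
    rw [e_lhs, e_rhs]
    apply mul_le_mul_of_nonneg_right hmm
    apply div_nonneg
    · exact mul_nonneg (mul_nonneg (pow_nonneg hq0 _) (pow_nonneg hq0 _))
        (mul_nonneg hPa0 hPb0)
    · exact (mul_pos hkka hkkb).le
  calc (((k.sum fun _ v => v : ℕ) : ℝ) ^ (k.sum fun _ v => v : ℕ) /
        ∏ n ∈ k.support, (k n : ℝ) ^ k n) * q ^ k.support.card *
      ∏ n ∈ k.support, (z n) ^ k n
      ≤ _ := hstep
    _ ≤ (C^N * (Real.exp δ * r) ^ Sa) *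
        ((Nat.multinomial b.support b : ℝ) *
          ∏ n ∈ b.support, ((Real.exp (2+1/δ) * C) * z n) ^ b n) := by
        apply mul_le_mul HA HB _ _
        · apply mul_nonneg (Real.exp_pos _).le
          apply mul_nonneg (mul_nonneg (div_nonneg (by positivity) hkkb.le) (by positivity)) hPb0
        · positivity


end LempertDelta

open LempertDelta


theorem Delta_series_unif_conv_on_compacts
    (term : (ℕ →₀ ℕ) → ℂ × lp (fun _ : ℕ => ℂ) 1 → ℝ)
    (hterm : ∀ k p, term k p =
      (((k.sum fun _ v => v : ℕ) : ℝ) ^ (k.sum fun _ v => v : ℕ) /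
          ∏ n ∈ k.support, (k n : ℝ) ^ k n) *
        ‖p.1‖ ^ k.support.card *
        ∏ n ∈ k.support, ‖p.2 n‖ ^ k n) :
    ∀ K : Set (ℂ × lp (fun _ : ℕ => ℂ) 1),
      IsCompact K → K ⊆ {p | ‖p.2‖ < 1} →
      TendstoUniformlyOn
        (fun (s : Finset (ℕ →₀ ℕ)) (p : ℂ × lp (fun _ : ℕ => ℂ) 1) => ∑ k ∈ s, term k p)
        (fun p => ∑' k : ℕ →₀ ℕ, term k p) atTop K := by
  intro K hK hKlt
  rcases Set.eq_empty_or_nonempty K with rfl | hKne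
  · exact tendstoUniformlyOn_empty
  classical
  have hterm_nonneg : ∀ k p, 0 ≤ term k p := by
    intro k p
    rw [hterm]
    apply mul_nonneg (mul_nonneg _ _) _
    · exact div_nonneg (by positivity) (kk_pos k).le
    · exact pow_nonneg (norm_nonneg _) _
    · exact Finset.prod_nonneg fun n _ => pow_nonneg (norm_nonneg _) _
  -- constants r and C
  obtain ⟨pr, hprK, hr⟩ := hK.exists_isMaxOn hKne (continuous_snd.norm.continuousOn)
  set r : ℝ := ‖pr.2‖ with hrdef
  have hr0 : 0 ≤ r := norm_nonneg _
  have hr1 : r < 1 := hKlt hprK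
  have hKr : ∀ p ∈ K, ‖p.2‖ ≤ r := fun p hp => hr hp
  obtain ⟨pc, hpcK, hc⟩ := hK.exists_isMaxOn hKne
    ((continuous_norm.comp continuous_fst).continuousOn)
  set C : ℝ := max 1 (‖pc.1‖) with hCdef
  have hC1 : (1:ℝ) ≤ C := le_max_left _ _
  have hC0 : (0:ℝ) < C := lt_of_lt_of_le one_pos hC1
  have hKC : ∀ p ∈ K, ‖p.1‖ ≤ C := fun p hp =>
    le_trans (hc hp) (le_max_right _ _)
  -- δ
  obtain ⟨δ, hδ0, hδr⟩ : ∃ δ : ℝ, 0 < δ ∧ Real.exp δ * r < 1 := by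
    have ht : Tendsto (fun d : ℝ => Real.exp d * r) (nhdsWithin 0 (Set.Ioi 0))
        (nhds (Real.exp 0 * r)) :=
      ((Real.continuous_exp.mul continuous_const).tendsto 0).mono_left nhdsWithin_le_nhds
    rw [Real.exp_zero, one_mul] at ht
    have h1 := ht.eventually_lt_const hr1
    have h2 : ∀ᶠ d in nhdsWithin (0:ℝ) (Set.Ioi 0), 0 < d := eventually_mem_nhdsWithin
    obtain ⟨δ, hδ1, hδ2⟩ := (h1.and h2).exists
    exact ⟨δ, hδ2, hδ1⟩
  set u₀ : ℝ := Real.exp δ * r with hu₀def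
  have hu₀0 : 0 ≤ u₀ := mul_nonneg (Real.exp_pos δ).le hr0
  have hu₀1 : u₀ < 1 := hδr
  set G : ℝ := Real.exp (2+1/δ) * C with hGdef
  have hG0 : 0 < G := mul_pos (Real.exp_pos _) hC0
  obtain ⟨N, hN⟩ := uniform_tail hK (show (0:ℝ) < 1/(2*G) by positivity)
  set SH : ℝ := C^N * ((1-u₀)⁻¹)^N with hSHdef
  have hSH0 : 0 < SH :=
    mul_pos (pow_pos hC0 N) (pow_pos (inv_pos.mpr (by linarith)) N)
  -- the key tail estimate
  have key : ∀ ε : ℝ, 0 < ε → ∃ s₀ : Finset (ℕ →₀ ℕ), ∀ p ∈ K, ∀ u : Finset (ℕ →₀ ℕ),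
      (∀ k ∈ u, k ∉ s₀) → ∑ k ∈ u, term k p ≤ ε := by
    intro ε hε
    obtain ⟨N', hN'⟩ := uniform_tail hK
      (show (0:ℝ) < min (1/(2*G)) (ε/(16*G*SH)) by positivity)
    set N₂ : ℕ := max N N' with hN₂def
    have hsq0 : 0 ≤ Real.sqrt r := Real.sqrt_nonneg r
    have hsq1 : Real.sqrt r < 1 := by
      calc Real.sqrt r < Real.sqrt 1 := Real.sqrt_lt_sqrt hr0 hr1
        _ = 1 := Real.sqrt_one
    set D : ℝ := C^N₂ * ((1-Real.sqrt r)⁻¹)^N₂ with hDdef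
    have hD0 : 0 < D :=
      mul_pos (pow_pos hC0 _) (pow_pos (inv_pos.mpr (by linarith)) _)
    obtain ⟨M, hM⟩ : ∃ M : ℕ, D * (Real.sqrt r)^M ≤ ε/2 := by
      have ht : Tendsto (fun M : ℕ => D * (Real.sqrt r)^M) atTop (nhds (D*0)) :=
        tendsto_const_nhds.mul (tendsto_pow_atTop_nhds_zero_of_lt_one hsq0 hsq1)
      rw [mul_zero] at ht
      obtain ⟨M, hM⟩ := (ht.eventually_lt_const (show (0:ℝ) < ε/2 by linarith)).exists
      exact ⟨M, hM.le⟩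
    set s₀ : Finset (ℕ →₀ ℕ) :=
      (Finset.range (M+1)).biUnion
        (fun m => Finset.finsuppAntidiag (Finset.range N₂) m) with hs₀def
    have hs₀mem : ∀ k : ℕ →₀ ℕ, k.support ⊆ Finset.range N₂ →
        (k.sum fun _ v => v : ℕ) ≤ M → k ∈ s₀ := by
      intro k hsupp hsum
      rw [hs₀def, Finset.mem_biUnion]
      refine ⟨(k.sum fun _ v => v : ℕ), Finset.mem_range.mpr (Nat.lt_succ_of_le hsum), ?_⟩
      rw [Finset.mem_finsuppAntidiag]
      refine ⟨?_, hsupp⟩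
      rw [show (k.sum fun _ v => v : ℕ) = ∑ n ∈ k.support, k n from rfl]
      exact (Finset.sum_subset hsupp
        (fun i _ hi => Finsupp.notMem_support_iff.mp hi)).symm
    refine ⟨s₀, ?_⟩
    intro p hp u hu
    have hzn : ∀ n, 0 ≤ ‖p.2 n‖ := fun n => norm_nonneg _
    have hq0 : 0 ≤ ‖p.1‖ := norm_nonneg _
    have hqC : ‖p.1‖ ≤ C := hKC p hp
    have hzr : ∀ F : Finset ℕ, ∑ n ∈ F, ‖p.2 n‖ ≤ r :=
      fun F => le_trans (lp_finsum_le p.2 F) (hKr p hp)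
    have htail : ∀ F : Finset ℕ, (∀ n ∈ F, N ≤ n) →
        ∑ n ∈ F, ‖p.2 n‖ ≤ 1/(2*G) :=
      fun F hF => le_trans (far_sum_le_tail p.2 N F hF) (hN p hp)
    have hfar : ∀ F : Finset ℕ, (∀ n ∈ F, N₂ ≤ n) →
        ∑ n ∈ F, ‖p.2 n‖ ≤ ε/(16*G*SH) := by
      intro F hF
      refine le_trans (le_trans (far_sum_le_tail p.2 N' F
        (fun n hn => le_trans (le_max_right N N') (hF n hn))) (hN' p hp)) ?_
      exact min_le_right _ _
    set u₁ := u.filter (fun k => k.support ⊆ Finset.range N₂) with hu₁def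
    set u₂ := u.filter (fun k => ¬ k.support ⊆ Finset.range N₂) with hu₂def
    have husplit : ∑ k ∈ u, term k p = ∑ k ∈ u₁, term k p + ∑ k ∈ u₂, term k p :=
      (Finset.sum_filter_add_sum_filter_not u _ _).symm
    -- estimate on u₁
    have hU1 : ∑ k ∈ u₁, term k p ≤ ε/2 := by
      have hperterm : ∀ k ∈ u₁, term k p ≤
          (C^N₂ * (Real.sqrt r)^M) * (Real.sqrt r) ^ (k.sum fun _ v => v : ℕ) := by
        intro k hk
        rw [hu₁def, Finset.mem_filter] at hk
        have hsupp := hk.2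
        have hMlt : M < (k.sum fun _ v => v : ℕ) := by
          by_contra h
          exact hu k hk.1 (hs₀mem k hsupp (by omega))
        have h1 : term k p ≤ C ^ k.support.card * r ^ (k.sum fun _ v => v : ℕ) := by
          rw [hterm]
          exact term_bound hC1 hr0 hzn hq0 hqC hzr k
        have h2 : C ^ k.support.card ≤ C ^ N₂ := by
          apply pow_le_pow_right₀ hC1
          calc k.support.card ≤ (Finset.range N₂).card := Finset.card_le_card hsupp
            _ = N₂ := Finset.card_range _
        have h3 : r ^ (k.sum fun _ v => v : ℕ) ≤
            (Real.sqrt r)^M * (Real.sqrt r) ^ (k.sum fun _ v => v : ℕ) := by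
          have hrr : r ^ (k.sum fun _ v => v : ℕ)
              = (Real.sqrt r) ^ (k.sum fun _ v => v : ℕ) *
                (Real.sqrt r) ^ (k.sum fun _ v => v : ℕ) := by
            rw [← mul_pow, Real.mul_self_sqrt hr0]
          rw [hrr]
          apply mul_le_mul_of_nonneg_right _ (pow_nonneg hsq0 _)
          exact pow_le_pow_of_le_one hsq0 hsq1.le (by omega)
        calc term k p ≤ C ^ k.support.card * r ^ (k.sum fun _ v => v : ℕ) := h1
          _ ≤ C ^ N₂ * ((Real.sqrt r)^M * (Real.sqrt r) ^ (k.sum fun _ v => v : ℕ)) := by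
              apply mul_le_mul h2 h3 (pow_nonneg hr0 _) (pow_nonneg hC0.le _)
          _ = (C^N₂ * (Real.sqrt r)^M) * (Real.sqrt r) ^ (k.sum fun _ v => v : ℕ) := by
              ring
      calc ∑ k ∈ u₁, term k p
          ≤ ∑ k ∈ u₁, (C^N₂ * (Real.sqrt r)^M) * (Real.sqrt r) ^ (k.sum fun _ v => v : ℕ) :=
            Finset.sum_le_sum hperterm
        _ = (C^N₂ * (Real.sqrt r)^M) *
            ∑ k ∈ u₁, (Real.sqrt r) ^ (k.sum fun _ v => v : ℕ) := by
            rw [Finset.mul_sum]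
        _ ≤ (C^N₂ * (Real.sqrt r)^M) * ((1-Real.sqrt r)⁻¹)^N₂ := by
            apply mul_le_mul_of_nonneg_left
              (box N₂ hsq0 hsq1 u₁ (fun k hk => (Finset.mem_filter.mp hk).2))
              (by positivity)
        _ = D * (Real.sqrt r)^M := by rw [hDdef]; ring
        _ ≤ ε/2 := hM
    -- estimate on u₂
    have hU2 : ∑ k ∈ u₂, term k p ≤ ε/2 := by
      set fa : (ℕ →₀ ℕ) → (ℕ →₀ ℕ) := fun k => k.filter (fun n => n < N) with hfa
      set fb : (ℕ →₀ ℕ) → (ℕ →₀ ℕ) := fun k => k.filter (fun n => ¬ n < N) with hfb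
      set AA : (ℕ →₀ ℕ) → ℝ := fun a => C^N * u₀ ^ (a.sum fun _ v => v : ℕ) with hAA
      set BB : (ℕ →₀ ℕ) → ℝ := fun b => (Nat.multinomial b.support b : ℝ) *
        ∏ n ∈ b.support, (G * ‖p.2 n‖) ^ b n with hBB
      have hAA0 : ∀ a, 0 ≤ AA a := fun a =>
        mul_nonneg (pow_nonneg hC0.le _) (pow_nonneg hu₀0 _)
      have hBB0 : ∀ b, 0 ≤ BB b := fun b =>
        mul_nonneg (Nat.cast_nonneg _)
          (Finset.prod_nonneg fun n _ => pow_nonneg (mul_nonneg hG0.le (hzn n)) _)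
      have hsplitterm : ∀ k : ℕ →₀ ℕ, term k p ≤ AA (fa k) * BB (fb k) := by
        intro k
        rw [hterm]
        exact term_split hδ0 hC1 hr0 N hzn hq0 hqC hzr k
      have hinj : ∀ x ∈ u₂, ∀ y ∈ u₂, (fa x, fb x) = (fa y, fb y) → x = y := by
        intro x _ y _ h
        rw [Prod.mk.injEq] at h
        have hx : fa x + fb x = x := Finsupp.filter_pos_add_filter_neg x _
        have hy : fa y + fb y = y := Finsupp.filter_pos_add_filter_neg y _
        rw [← hx, ← hy, h.1, h.2]
      calc ∑ k ∈ u₂, term k p ≤ ∑ k ∈ u₂, AA (fa k) * BB (fb k) :=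
            Finset.sum_le_sum fun k _ => hsplitterm k
        _ = ∑ pr ∈ u₂.image (fun k => (fa k, fb k)), AA pr.1 * BB pr.2 := by
            rw [Finset.sum_image hinj]
        _ ≤ ∑ pr ∈ (u₂.image fa) ×ˢ (u₂.image fb), AA pr.1 * BB pr.2 := by
            apply Finset.sum_le_sum_of_subset_of_nonneg
            · intro pr hpr
              rw [Finset.mem_image] at hpr
              obtain ⟨k, hk, rfl⟩ := hpr
              rw [Finset.mem_product]
              exact ⟨Finset.mem_image_of_mem _ hk, Finset.mem_image_of_mem _ hk⟩
            · intro pr _ _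
              exact mul_nonneg (hAA0 _) (hBB0 _)
        _ = (∑ a ∈ u₂.image fa, AA a) * (∑ b ∈ u₂.image fb, BB b) := by
            rw [Finset.sum_mul_sum, Finset.sum_product]
        _ ≤ SH * (4 * (ε/(16*SH))) := by
            apply mul_le_mul
            · -- head sum bound
              calc ∑ a ∈ u₂.image fa, AA a
                  = C^N * ∑ a ∈ u₂.image fa, u₀ ^ (a.sum fun _ v => v : ℕ) := by
                    rw [hAA, Finset.mul_sum]
                _ ≤ C^N * ((1-u₀)⁻¹)^N := by
                    apply mul_le_mul_of_nonneg_left _ (pow_pos hC0 N).le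
                    apply box N hu₀0 hu₀1
                    intro a ha
                    rw [Finset.mem_image] at ha
                    obtain ⟨k, _, rfl⟩ := ha
                    intro n hn
                    rw [hfa] at hn
                    rw [Finsupp.support_filter, Finset.mem_filter] at hn
                    exact Finset.mem_range.mpr hn.2
                _ = SH := hSHdef.symm
            · -- tail sum bound
              have := tailsum N N₂ (fun n => G * ‖p.2 n‖)
                (fun n => mul_nonneg hG0.le (hzn n)) (ε/(16*SH))
                (by positivity) ?_ ?_ (u₂.image fb) ?_
              · exact this
              · -- hθ
                intro F hF
                rw [← Finset.mul_sum]
                calc G * ∑ n ∈ F, ‖p.2 n‖ ≤ G * (1/(2*G)) :=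
                    mul_le_mul_of_nonneg_left (htail F hF) hG0.le
                  _ = 1/2 := by field_simp
              · -- hθf
                intro F hF
                rw [← Finset.mul_sum]
                calc G * ∑ n ∈ F, ‖p.2 n‖ ≤ G * (ε/(16*G*SH)) :=
                    mul_le_mul_of_nonneg_left (hfar F hF) hG0.le
                  _ = ε/(16*SH) := by field_simp
              · -- hv
                intro b hb
                rw [Finset.mem_image] at hb
                obtain ⟨k, hk, rfl⟩ := hb
                constructor
                · intro n hn
                  rw [hfb, Finsupp.support_filter, Finset.mem_filter] at hn
                  omega
                · rw [hu₂def, Finset.mem_filter] at hk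
                  obtain ⟨n, hn, hn2⟩ := Finset.not_subset.mp hk.2
                  refine ⟨n, ?_, ?_⟩
                  · rw [hfb, Finsupp.support_filter, Finset.mem_filter]
                    have : N₂ ≤ n := le_of_not_gt (fun h => hn2 (Finset.mem_range.mpr h))
                    have hNn : N ≤ n := le_trans (le_max_left N N') this
                    exact ⟨hn, by omega⟩
                  · exact le_of_not_gt (fun h => hn2 (Finset.mem_range.mpr h))
            · apply Finset.sum_nonneg fun b _ => hBB0 b
            · exact hSH0.le
        _ = ε/4 := by field_simp; ring
        _ ≤ ε/2 := by linarith
    rw [husplit]; linarith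
  -- summability
  have hsummable : ∀ p ∈ K, Summable (fun k => term k p) := by
    intro p hp
    obtain ⟨s₁, hs₁⟩ := key 1 one_pos
    apply summable_of_sum_le (c := (∑ k ∈ s₁, term k p) + 1)
      (fun k => hterm_nonneg k p)
    intro w
    have hw : ∑ k ∈ w, term k p
        = ∑ k ∈ w.filter (fun k => k ∈ s₁), term k p
          + ∑ k ∈ w.filter (fun k => k ∉ s₁), term k p :=
      (Finset.sum_filter_add_sum_filter_not w _ _).symm
    have h1 : ∑ k ∈ w.filter (fun k => k ∈ s₁), term k p ≤ ∑ k ∈ s₁, term k p := by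
      apply Finset.sum_le_sum_of_subset_of_nonneg
      · intro k hk
        exact (Finset.mem_filter.mp hk).2
      · intro k _ _
        exact hterm_nonneg k p
    have h2 : ∑ k ∈ w.filter (fun k => k ∉ s₁), term k p ≤ 1 :=
      hs₁ p hp _ (fun k hk => (Finset.mem_filter.mp hk).2)
    linarith
  -- conclusion
  rw [Metric.tendstoUniformlyOn_iff]
  intro ε hε
  obtain ⟨s₀, hs₀⟩ := key (ε/2) (by linarith)
  rw [eventually_atTop]
  refine ⟨s₀, fun s hs p hp => ?_⟩
  have hsum := hsummable p hp
  have hsplit := Summable.sum_add_tsum_subtype_compl hsum s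
  rw [Real.dist_eq]
  have htail_le : ∑' (x : {x // x ∉ s}), term (↑x) p ≤ ε/2 := by
    apply tsum_le_of_sum_le' (by linarith)
    intro w
    have himg : ∑ x ∈ w, term (↑x) p = ∑ k ∈ w.image Subtype.val, term k p := by
      rw [Finset.sum_image (fun x _ y _ h => Subtype.ext h)]
    rw [himg]
    apply hs₀ p hp
    intro k hk
    rw [Finset.mem_image] at hk
    obtain ⟨x, _, rfl⟩ := hk
    exact fun hmem => x.2 (hs hmem)
  have htail_nonneg : 0 ≤ ∑' (x : {x // x ∉ s}), term (↑x) p :=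
    tsum_nonneg fun x => hterm_nonneg _ p
  have heq : (∑' k, term k p) - ∑ k ∈ s, term k p
      = ∑' (x : {x // x ∉ s}), term (↑x) p := by linarith
  rw [heq, abs_of_nonneg htail_nonneg]
  linarith
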